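/- Define a_0=1 and, for each integer k≥1, a_k = Σ_{m=1}^{k+1} ((−1)^{m−1}/m) · Σ 1/((p_1+1)!(p_2+1)!⋯(p_{m−1}+1)!·p_m!), where the inner sum runs over all tuples (p_1,…,p_m) of nonnegative integers with p_1+⋯+p_m = k+1−m. Then the formal power series Σ_{k=0}^∞ a_k x^k equals x/(1−e^{−x}); equivalently, (Σ_{k=0}^∞ a_k x^k)·(1−e^{−x}) = x as formal power series, and also a_k = [(y∂_y)^k/k!](y·ln y/(y−1)) evaluated at y=1. (These a_k are the coefficients in the Campbell–Hausdorff formula ln(e^A e^B) = A + B + Σ_{r≥1} a_r (ad A)^r(B) valid when the ideal generated by B is abelian.) -/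

import Mathlib

noncomputable section

/-- The algebra of linear operators on polynomials in `n` variables (contains the
differential operators with polynomial coefficients). -/
abbrev DiffOp (n : ℕ) : Type := Module.End ℂ (MvPolynomial (Fin n) ℂ)

/-- The partial derivative operator `∂_{x_i}`. -/
noncomputable def pd {n : ℕ} (i : Fin n) : DiffOp n := (MvPolynomial.pderiv i).toLinearMap

/-- The operator of multiplication by `x_i`. -/
noncomputable def mX {n : ℕ} (i : Fin n) : DiffOp n := LinearMap.mulLeft ℂ (MvPolynomial.X i)

/-- The operator of multiplication by the monomial `∏ x_a ^ (j a)`. -/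
noncomputable def mXpow {n : ℕ} (j : Fin n → ℕ) : DiffOp n :=
  LinearMap.mulLeft ℂ (∏ a : Fin n, (MvPolynomial.X a) ^ (j a))

/-- A tree diagram on `n` nodes (nodes `0,…,n-1`, node `0` being the root): every node
`i ≠ 0` has a unique parent `parent i < i`, and the edge `(parent i, i)` carries a
positive integral weight `weight i`. -/
structure TreeDiagram (n : ℕ) [NeZero n] where
  parent : Fin n → Fin n
  parent_lt : ∀ i : Fin n, i ≠ 0 → parent i < i
  weight : Fin n → ℕ
  weight_pos : ∀ i : Fin n, i ≠ 0 → 0 < weight i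

variable {n : ℕ} [NeZero n]

/-- The clan of a node: the set of nodes on the unique path from the root to `i`
(including both ends). -/
def clanSet (T : TreeDiagram n) : Fin n → Finset (Fin n)
  | i => if h : i = 0 then {i} else insert i (clanSet T (T.parent i))
termination_by i => i.val
decreasing_by exact T.parent_lt i h

/-- The product of the weights of all edges along the path from the root to `i`. -/
def chainWt (T : TreeDiagram n) : Fin n → ℕ
  | i => if h : i = 0 then 1 else chainWt T (T.parent i) * T.weight i
termination_by i => i.val
decreasing_by exact T.parent_lt i h

/-- `j` is a descendant of `i`. -/
def Desc (T : TreeDiagram n) (i j : Fin n) : Prop := i ≠ j ∧ i ∈ clanSet T j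

/-- A node is a tip if it has no children. -/
def IsTip (T : TreeDiagram n) (i : Fin n) : Prop := ∀ j : Fin n, j ≠ 0 → T.parent j ≠ i

/-- Generators `∂_{x_1}` and `x_i^{d[(ι_i,ι_j)]} ∂_{x_j}` for edges `(ι_i,ι_j)`. -/
def upGens (T : TreeDiagram n) : Set (DiffOp n) :=
  {pd (0 : Fin n)} ∪ {A | ∃ j : Fin n, j ≠ 0 ∧ A = (mX (T.parent j)) ^ (T.weight j) * pd j}

/-- Generators `∂_{x_r}` for tips `ι_r` and `x_j^{d[(ι_i,ι_j)]} ∂_{x_i}` for edges. -/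
def downGens (T : TreeDiagram n) : Set (DiffOp n) :=
  {A | ∃ r : Fin n, IsTip T r ∧ A = pd r} ∪
    {A | ∃ j : Fin n, j ≠ 0 ∧ A = (mX j) ^ (T.weight j) * pd (T.parent j)}

attribute [local instance 100] LieRing.ofAssociativeRing

/-- The upward nilpotent Lie algebra `L_0(T^d)`. -/
def upL0 (T : TreeDiagram n) : LieSubalgebra ℂ (DiffOp n) :=
  LieSubalgebra.lieSpan ℂ _ (upGens T)

/-- The downward nilpotent Lie algebra `ℒ_0(T^d)`. -/
def downL0 (T : TreeDiagram n) : LieSubalgebra ℂ (DiffOp n) :=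
  LieSubalgebra.lieSpan ℂ _ (downGens T)

/-- The toral Cartan subalgebra `H = Σ ℂ x_i ∂_{x_i}`. -/
def Hcart (n : ℕ) : Submodule ℂ (DiffOp n) :=
  Submodule.span ℂ (Set.range fun i : Fin n => mX i * pd i)

/-- `L_1(T^d) = H + L_0(T^d)`. -/
def upL1 (T : TreeDiagram n) : Submodule ℂ (DiffOp n) := Hcart n ⊔ (upL0 T).toSubmodule

/-- `ℒ_1(T^d) = H + ℒ_0(T^d)`. -/
def downL1 (T : TreeDiagram n) : Submodule ℂ (DiffOp n) := Hcart n ⊔ (downL0 T).toSubmodule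

/-- `I` is an abelian (Lie) ideal of `L`. -/
def IsAbelianIdeal (L I : Submodule ℂ (DiffOp n)) : Prop :=
  I ≤ L ∧ (∀ x ∈ L, ∀ y ∈ I, ⁅x, y⁆ ∈ I) ∧ ∀ x ∈ I, ∀ y ∈ I, ⁅x, y⁆ = (0 : DiffOp n)

/-- The lower central series: `lcs L k = G^{k+1}` in the paper's notation
(`G^1 = G`, `G^{i+1} = [G, G^i]`). -/
def lcs (L : LieSubalgebra ℂ (DiffOp n)) : ℕ → Submodule ℂ (DiffOp n)
  | 0 => L.toSubmodule
  | (k+1) => Submodule.span ℂ {z : DiffOp n | ∃ x ∈ L, ∃ y ∈ lcs L k, z = ⁅x, y⁆}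

/-- Membership in `R_i`: exponent tuples supported on the strict ancestors of `i`
(the clan of `i` with `i` removed) with `Σ_a j_a · d_1⋯d_{s(a)-1} ≤ d_1⋯d_{r-1}`. -/
def memR (T : TreeDiagram n) (i : Fin n) (j : Fin n → ℕ) : Prop :=
  (∀ a : Fin n, a ∉ (clanSet T i).erase i → j a = 0) ∧
    ∑ a ∈ (clanSet T i).erase i, j a * chainWt T a ≤ chainWt T i

/-- `ℓ_i`: the number of exponent tuples in `R_i`. -/
def ellCard (T : TreeDiagram n) (i : Fin n) : ℕ := Nat.card {j : Fin n → ℕ // memR T i j}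

/-- A node is multiplicity-free if the edge to its parent has weight 1. -/
def MultFree (T : TreeDiagram n) (i : Fin n) : Prop := i ≠ 0 ∧ T.weight i = 1

/-- `Υ`: the set of nodes all of whose descendants are multiplicity-free. -/
def Upsilon (T : TreeDiagram n) : Set (Fin n) := {i | ∀ j : Fin n, Desc T i j → MultFree T j}

/-- A set of nodes is independent if no element is a descendant of another. -/
def IndepSet (T : TreeDiagram n) (S : Set (Fin n)) : Prop :=
  ∀ a ∈ S, ∀ b ∈ S, ¬ Desc T a b

/-- The ideal `I(S) = Span{x^{j⃗}∂_{x_i}, x^{j⃗}∂_{x_s} : ι_i ∈ S, j⃗ ∈ R_i, ι_s ∈ D_i}`. -/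
def upIdealS (T : TreeDiagram n) (S : Set (Fin n)) : Submodule ℂ (DiffOp n) :=
  Submodule.span ℂ
    {A : DiffOp n | ∃ i ∈ S, ∃ j : Fin n → ℕ, memR T i j ∧
      ∃ s : Fin n, (s = i ∨ Desc T i s) ∧ A = mXpow j * pd s}

/-- The partial order `⪯` on `R_i`. -/
def Rle (T : TreeDiagram n) (i : Fin n) (j l : Fin n → ℕ) : Prop :=
  ∀ b ∈ (clanSet T i).erase i,
    ∑ a ∈ ((clanSet T i).erase i).filter (fun a => b ∈ clanSet T a),
        j a * (chainWt T a / chainWt T b) ≤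
      ∑ a ∈ ((clanSet T i).erase i).filter (fun a => b ∈ clanSet T a),
        l a * (chainWt T a / chainWt T b)

/-- `W = S ∪ ⋃_{ι_i ∈ S} D_i`. -/
def Wset (T : TreeDiagram n) (S : Set (Fin n)) : Set (Fin n) :=
  {r | ∃ i ∈ S, r = i ∨ Desc T i r}

/-- An admissible pair for abelian ideals of `L_1(T^d)`. -/
structure UpAdmiss (n : ℕ) [NeZero n] (T : TreeDiagram n) where
  S : Set (Fin n)
  K : Fin n → Set (Fin n → ℕ)
  S_ne : S.Nonempty
  S_sub : S ⊆ Upsilon T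
  S_indep : IndepSet T S
  K_out : ∀ r : Fin n, r ∉ Wset T S → K r = ∅
  K_mem : ∀ i ∈ S, ∀ r : Fin n, (r = i ∨ Desc T i r) → ∀ j ∈ K r, memR T i j
  K_indep : ∀ i ∈ S, ∀ r : Fin n, (r = i ∨ Desc T i r) →
    ∀ j ∈ K r, ∀ l ∈ K r, Rle T i j l → Rle T i l j
  K_ne : ∀ i ∈ S, (K i).Nonempty
  K_chain : ∀ i ∈ S, ∀ r : Fin n, (r = i ∨ Desc T i r) → ∀ s : Fin n, Desc T r s →
    ∀ j ∈ K r, ∀ l ∈ K s, ¬ (Rle T i l j ∧ ¬ Rle T i j l)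

/-- The abelian ideal `I[S,{K_r}] = Σ_{ι_s∈W} Σ_{j⃗∈K_s} I[s,j⃗]`. -/
def upAdIdeal (T : TreeDiagram n) (P : UpAdmiss n T) : Submodule ℂ (DiffOp n) :=
  Submodule.span ℂ
    {A : DiffOp n | ∃ i ∈ P.S, ∃ s : Fin n, (s = i ∨ Desc T i s) ∧ ∃ j ∈ P.K s,
      ∃ l : Fin n → ℕ, memR T i l ∧ Rle T i l j ∧
        ∃ r : Fin n, (r = s ∨ Desc T s r) ∧ A = mXpow l * pd r}

instance (T : TreeDiagram n) (i : Fin n) : Decidable (IsTip T i) :=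
  decidable_of_iff (∀ j : Fin n, j ≠ 0 → T.parent j ≠ i) Iff.rfl

instance (T : TreeDiagram n) (i j : Fin n) : Decidable (Desc T i j) :=
  decidable_of_iff (i ≠ j ∧ i ∈ clanSet T j) Iff.rfl

/-- `D_i` as a finset. -/
def Dfin (T : TreeDiagram n) (i : Fin n) : Finset (Fin n) :=
  Finset.univ.filter fun j => Desc T i j

/-- `κ_i`: the product of the weights of all edges inside `F_i = {ι_i} ∪ D_i`. -/
def kappa (T : TreeDiagram n) (i : Fin n) : ℕ := ∏ j ∈ Dfin T i, T.weight j

/-- The product of the weights of the edges on the path from `i` to a descendant `j`: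
`∏_{e ∈ E_{i,j}} d(e)`. -/
def pathWt (T : TreeDiagram n) (i j : Fin n) : ℕ :=
  ∏ a ∈ (clanSet T j) \ (clanSet T i), T.weight a

/-- `κ_{i,j} = κ_i / ∏_{e ∈ E_{i,j}} d(e)`. -/
def kappaIS (T : TreeDiagram n) (i j : Fin n) : ℕ := kappa T i / pathWt T i j

/-- Membership in `ℜ_i`: tuples supported on `D_i` with `Σ_s j_s κ_{i,s} ≤ κ_i`. -/
def memcR (T : TreeDiagram n) (i : Fin n) (j : Fin n → ℕ) : Prop :=
  (∀ a : Fin n, ¬ Desc T i a → j a = 0) ∧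
    ∑ a ∈ Dfin T i, j a * kappaIS T i a ≤ kappa T i

/-- The partial order `⪯` on `ℜ_i`. -/
def cRle (T : TreeDiagram n) (i : Fin n) (j l : Fin n → ℕ) : Prop :=
  ∀ m : Fin n, Desc T i m →
    ∑ r ∈ (clanSet T (T.parent m)) \ (clanSet T i), j r * pathWt T r (T.parent m) ≤
      ∑ r ∈ (clanSet T (T.parent m)) \ (clanSet T i), l r * pathWt T r (T.parent m)

/-- `Φ = {ι_1} ∪ {ι_i : all edges inside the clan of `ι_i` have weight 1}`. -/
def PhiSet (T : TreeDiagram n) : Set (Fin n) :=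
  {i | ∀ a ∈ clanSet T i, a ≠ 0 → T.weight a = 1}

/-- `Ω`: the set of children of the root. -/
def OmegaSet (T : TreeDiagram n) : Set (Fin n) := {i | i ≠ 0 ∧ T.parent i = 0}

/-- The ideal `𝓘(S) = Span{x^{j⃗}∂_{x_s} : ι_i ∈ S, j⃗ ∈ ℜ_i, ι_s ∈ C_i}`. -/
def downIdealS (T : TreeDiagram n) (S : Set (Fin n)) : Submodule ℂ (DiffOp n) :=
  Submodule.span ℂ
    {A : DiffOp n | ∃ i ∈ S, ∃ j : Fin n → ℕ, memcR T i j ∧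
      ∃ s ∈ clanSet T i, A = mXpow j * pd s}

/-- An admissible pair for abelian ideals of `ℒ_1(T^d)`. -/
structure DownAdmiss (n : ℕ) [NeZero n] (T : TreeDiagram n) where
  S : Set (Fin n)
  K : Fin n → Fin n → Set (Fin n → ℕ)
  S_ne : S.Nonempty
  S_sub : S ⊆ PhiSet T
  S_indep : IndepSet T S
  K_out : ∀ i r : Fin n, (i ∉ S ∨ r ∉ clanSet T i) → K i r = ∅
  K_mem : ∀ i ∈ S, ∀ r ∈ clanSet T i, ∀ j ∈ K i r, memcR T i j
  K_indep : ∀ i ∈ S, ∀ r ∈ clanSet T i, ∀ j ∈ K i r, ∀ l ∈ K i r,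
    cRle T i j l → cRle T i l j
  K_ne : ∀ i ∈ S, (K i i).Nonempty
  K_cond : ∀ i ∈ S, ∀ s ∈ clanSet T i, ∀ r ∈ clanSet T s, r ≠ s →
    ∀ j ∈ K i r, ∀ l ∈ K i s, ¬ (cRle T i j l ∧ ¬ cRle T i l j)

/-- The abelian ideal `𝓘[S,{𝒦_r}] = Σ_{ι_s∈W} Σ_{j⃗∈𝒦_s} 𝓘[s,j⃗]`. -/
def downAdIdeal (T : TreeDiagram n) (P : DownAdmiss n T) : Submodule ℂ (DiffOp n) :=
  Submodule.span ℂ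
    {A : DiffOp n | ∃ i ∈ P.S, ∃ s ∈ clanSet T i, ∃ j ∈ P.K i s,
      ∃ l : Fin n → ℕ, memcR T s l ∧ cRle T s l j ∧
        ∃ r ∈ clanSet T s, A = mXpow l * pd r}

end

noncomputable section

/-- `A` acts locally nilpotently at `p`. -/
def LocNilpOn {M : Type} [AddCommGroup M] [Module ℂ M] (A : Module.End ℂ M) (p : M) : Prop :=
  ∃ N : ℕ, ∀ k : ℕ, N ≤ k → (A ^ k) p = 0

open scoped Classical in
/-- `e^A(p) = Σ_k A^k(p)/k!`, a finite sum when `A` acts locally nilpotently at `p`. -/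
noncomputable def expApply {M : Type} [AddCommGroup M] [Module ℂ M]
    (A : Module.End ℂ M) (p : M) : M :=
  if h : LocNilpOn A p then
    ∑ k ∈ Finset.range h.choose, ((k.factorial : ℂ))⁻¹ • (A ^ k) p
  else 0

open scoped Classical in
/-- `θ(A)(q) = Σ_{i≥1} ((−1)^{i−1}/i!) A^{i−1}(q)` where `θ(x) = (1−e^{−x})/x`. -/
noncomputable def thetaApply {M : Type} [AddCommGroup M] [Module ℂ M]
    (A : Module.End ℂ M) (q : M) : M :=
  if h : LocNilpOn A q then
    ∑ k ∈ Finset.range h.choose, ((-1 : ℂ) ^ k * (((k + 1).factorial : ℂ))⁻¹) • (A ^ k) q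
  else 0

abbrev DiffOp' (n : ℕ) : Type := Module.End ℂ (MvPolynomial (Fin n) ℂ)

noncomputable def pd' {n : ℕ} (i : Fin n) : DiffOp' n := (MvPolynomial.pderiv i).toLinearMap
noncomputable def mX' {n : ℕ} (i : Fin n) : DiffOp' n := LinearMap.mulLeft ℂ (MvPolynomial.X i)

/-- `D_i = t(∂_{x_1} + Σ_{r=1}^{i-1} x_r^{m_r} ∂_{x_{r+1}})` (0-based indices). -/
noncomputable def DchainOp (n : ℕ) (hn : 0 < n) (m : ℕ → ℕ) (t : ℂ) (i : ℕ) : DiffOp' n :=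
  t • (pd' (⟨0, hn⟩ : Fin n) +
    ∑ k ∈ Finset.univ.filter (fun k : Fin n => 0 < k.val ∧ k.val < i),
      (mX' (⟨k.val - 1, lt_of_le_of_lt (Nat.sub_le _ _) k.isLt⟩ : Fin n)) ^ (m k.val) * pd' k)

/-- `η_{j+1}` of the chain: `η_1(t) = t`, `η_{j+2}(t) = ∫_0^t (x_{j+1} + η_{j+1}(y))^{m_{j+1}} dy`. -/
noncomputable def etaChain (m : ℕ → ℕ) (x : ℕ → ℝ) : ℕ → ℝ → ℝ
  | 0 => fun t => t
  | (j+1) => fun t => ∫ y in (0:ℝ)..t, (x j + etaChain m x j y) ^ (m (j+1))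

/-- `ξ̃_{n-k}` of the chain (reversed indexing):
`ξ̃_n(t) = t w_n^{m_n}`, `ξ̃_i(t) = ∫_0^t (w_i + ξ̃_{i+1}(y))^{m_i} dy`. -/
noncomputable def xiRev (n : ℕ) (m : ℕ → ℕ) (w : ℕ → ℂ) : ℕ → ℝ → ℂ
  | 0 => fun t => (t : ℂ) * (w (n-1)) ^ (m n)
  | (k+1) => fun t => ∫ y in (0:ℝ)..t, (w (n-k-2) + xiRev n m w k y) ^ (m (n-k-1))

/-- Formal antiderivative `∫_0^t` of a polynomial. -/
noncomputable def polyInt (p : Polynomial ℂ) : Polynomial ℂ :=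
  p.sum fun k a => Polynomial.C (a / (k + 1)) * Polynomial.X ^ (k + 1)

/-- Coefficient-wise antiderivative of a polynomial in the commuting symbols `∂_{x_i}`
with coefficients polynomial in `t`. -/
noncomputable def mvPolyInt {n : ℕ} (q : MvPolynomial (Fin n) (Polynomial ℂ)) :
    MvPolynomial (Fin n) (Polynomial ℂ) :=
  ∑ d ∈ q.support, MvPolynomial.monomial d (polyInt (q.coeff d))

/-- Interpretation of a commutative polynomial in the symbols `∂_{x_i}` as a
constant-coefficient differential operator. -/
noncomputable def opOfDeriv {n : ℕ} (P : MvPolynomial (Fin n) ℂ) : DiffOp' n :=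
  ∑ d ∈ P.support, P.coeff d • ((List.finRange n).map fun a => pd' a ^ d a).prod

/-- `(Σ a_k x^k)` coefficients of the Campbell–Hausdorff formula. -/
noncomputable def aCH : ℕ → ℚ
  | 0 => 1
  | (k+1) => ∑ mm ∈ Finset.Icc 1 (k+2), ((-1 : ℚ)) ^ (mm - 1) / mm *
      ∑ p ∈ Finset.Nat.antidiagonalTuple mm (k + 2 - mm),
        ((∏ i : Fin mm, (if i.val = mm - 1 then (p i).factorial
          else ((p i) + 1).factorial : ℕ) : ℕ) : ℚ)⁻¹

end

noncomputable section
variable {n : ℕ} [NeZero n]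

/-- `η_i(t)` for a tree: `η_1(t) = t`,
`η_i(t) = ∫_0^t (x_{p(i)} + η_{p(i)}(y))^{d[(ι_{p(i)},ι_i)]} dy`. -/
noncomputable def etaTree (T : TreeDiagram n) (x : Fin n → ℝ) : Fin n → ℝ → ℝ
  | i => if h : i = 0 then fun t => t
      else fun t => ∫ y in (0:ℝ)..t, (x (T.parent i) + etaTree T x (T.parent i) y) ^ (T.weight i)
termination_by i => i.val
decreasing_by exact T.parent_lt i h

/-- The children of a node. -/
def childFinset (T : TreeDiagram n) (i : Fin n) : Finset (Fin n) :=
  Finset.univ.filter fun s : Fin n => s ≠ 0 ∧ T.parent s = i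

/-- `ξ̃_i(t)` as a polynomial in the commuting symbols `∂_{x_j}` (the variables of the
`MvPolynomial`) with coefficients polynomial in `t`:
`ξ̃_r(t) = t ∂_{x_r}^{m_r}` for tips, and
`ξ̃_i(t) = ∫_0^t (∂_{x_i} + Σ_{ι_s∈Θ_i} ξ̃_s(y))^{m_i} dy` otherwise. -/
noncomputable def xiTree (T : TreeDiagram n) (m : Fin n → ℕ) :
    Fin n → MvPolynomial (Fin n) (Polynomial ℂ)
  | i =>
    if IsTip T i then MvPolynomial.C Polynomial.X * (MvPolynomial.X i) ^ (m i)
    else mvPolyInt ((MvPolynomial.X i +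
      ∑ s ∈ (childFinset T i).attach, xiTree T m s.1) ^ (m i))
termination_by i => n - i.val
decreasing_by
  have hs := s.2
  simp only [childFinset, Finset.mem_filter, Finset.mem_univ, true_and] at hs
  have h1 : T.parent s.1 < s.1 := T.parent_lt s.1 hs.1
  rw [hs.2] at h1
  have h2 := s.1.isLt
  have h3 : i.val < s.1.val := h1
  omega

/-- The operator `ξ_i`: `ξ_1 = ξ̃_1(t)` and `ξ_i = x_{p(i)}·ξ̃_i(t)` for `i ≥ 2`. -/
noncomputable def xiFull (T : TreeDiagram n) (m : Fin n → ℕ) (t : ℂ) (i : Fin n) : DiffOp n :=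
  if i = 0 then opOfDeriv ((xiTree T m i).map (Polynomial.evalRingHom t))
  else mX (T.parent i) * opOfDeriv ((xiTree T m i).map (Polynomial.evalRingHom t))

/-- `D = ∂_{x_1}^{m_1} + Σ_{(ι_i,ι_j)∈E} x_i ∂_{x_j}^{m_j}`. -/
noncomputable def Dtree (T : TreeDiagram n) (m : Fin n → ℕ) : DiffOp n :=
  pd (0 : Fin n) ^ (m 0) +
    ∑ j ∈ Finset.univ.filter (fun j : Fin n => j ≠ 0), mX (T.parent j) * pd j ^ (m j)

/-- The chain tree `T_{A_n}` with all weights `1`. -/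
def chainTree (n : ℕ) [NeZero n] : TreeDiagram n where
  parent := fun i => ⟨i.val - 1, lt_of_le_of_lt (Nat.sub_le _ _) i.isLt⟩
  parent_lt := by
    intro i hi
    have h0 : i.val ≠ 0 := by
      intro h; exact hi (Fin.ext (by simpa using h))
    simp only [Fin.lt_def]
    omega
  weight := fun _ => 1
  weight_pos := fun _ _ => one_pos

end

noncomputable section
namespace CHaux

open PowerSeries

abbrev E : PowerSeries ℚ := PowerSeries.exp ℚ
abbrev u : PowerSeries ℚ := E - 1

lemma coeff_E (n : ℕ) : coeff n E = ((n.factorial : ℚ))⁻¹ := by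
  simp [PowerSeries.coeff_exp, one_div]

lemma coeff_u (n : ℕ) :
    coeff n u = if n = 0 then 0 else ((n.factorial : ℚ))⁻¹ := by
  simp only [u, map_sub, coeff_E, PowerSeries.coeff_one]
  split_ifs with h <;> simp [h]

lemma constantCoeff_u : constantCoeff u = 0 := by
  simpa using coeff_u 0

lemma coeff_u_pow_mul (m n : ℕ) (h : n < m) (g : PowerSeries ℚ) :
    coeff n (u ^ m * g) = 0 := by
  obtain ⟨w, hw⟩ := (X_dvd_iff (φ := u)).mpr constantCoeff_u
  have : u ^ m * g = (w ^ m * g) * X ^ m := by rw [hw]; ring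
  rw [this, coeff_mul_X_pow', if_neg (by omega)]

lemma derivative_E : d⁄dX ℚ E = E := by
  ext n
  rw [PowerSeries.coeff_derivative, coeff_E, coeff_E, Nat.factorial_succ]
  push_cast
  rw [mul_inv]
  field_simp

end CHaux

end

noncomputable section
namespace CHaux
open PowerSeries Finset

lemma coeff_u_pow_mul_E (m' n : ℕ) (h : m' ≤ n) :
    coeff n (u ^ m' * E) =
      ∑ p ∈ Finset.Nat.antidiagonalTuple (m' + 1) (n - m'),
        ((∏ i : Fin (m' + 1), (if i.val = m' then (p i).factorial
          else ((p i) + 1).factorial : ℕ) : ℕ) : ℚ)⁻¹ := by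
  classical
  set f : Fin (m' + 1) → PowerSeries ℚ := fun i => if i.val = m' then E else u with hf
  have hprod : u ^ m' * E = ∏ i : Fin (m' + 1), f i := by
    rw [Fin.prod_univ_castSucc]
    have h1 : ∀ i : Fin m', f i.castSucc = u := by
      intro i
      simp only [hf, Fin.coe_castSucc]
      rw [if_neg (by omega)]
    have h2 : f (Fin.last m') = E := by simp [hf]
    rw [h2, Finset.prod_congr rfl (fun i _ => h1 i), Finset.prod_const]
    simp [mul_comm]
  rw [hprod, PowerSeries.coeff_prod]
  rw [← Finset.sum_filter_of_ne
    (p := fun l : Fin (m' + 1) →₀ ℕ => ∀ i : Fin (m' + 1), i.val ≠ m' → l i ≠ 0) ?hz]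
  case hz =>
    intro l _ hne i hi
    intro h0
    apply hne
    apply Finset.prod_eq_zero (Finset.mem_univ i)
    rw [h0, hf]
    simp only [if_neg hi]
    simpa using coeff_u 0
  have hcount : ∑ k : Fin (m' + 1), (if k.val = m' then 0 else 1) = m' := by
    rw [Fin.sum_univ_castSucc]
    simp only [Fin.val_last, if_pos rfl, add_zero, Fin.coe_castSucc]
    rw [Finset.sum_congr rfl (fun i _ => if_neg (by omega)), Finset.sum_const]
    simp
  refine Finset.sum_nbij'
    (i := fun l k => if k.val = m' then l k else l k - 1)
    (j := fun p => Finsupp.equivFunOnFinite.symm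
      (fun k => if k.val = m' then p k else p k + 1)) ?_ ?_ ?_ ?_ ?_
  · intro l hl
    simp only [Finset.mem_filter, Finset.mem_finsuppAntidiag] at hl
    obtain ⟨⟨hsum, -⟩, hpos⟩ := hl
    rw [Finset.Nat.mem_antidiagonalTuple]
    show (∑ k : Fin (m' + 1), if (k : ℕ) = m' then l k else l k - 1) = n - m'
    have hsum' : ∑ k : Fin (m' + 1), l k = n := hsum
    have key : (∑ k : Fin (m' + 1), (if k.val = m' then l k else l k - 1)) +
        ∑ k : Fin (m' + 1), (if k.val = m' then 0 else 1) = ∑ k : Fin (m' + 1), l k := by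
      rw [← Finset.sum_add_distrib]
      refine Finset.sum_congr rfl fun k _ => ?_
      by_cases hk : k.val = m'
      · simp [hk]
      · have := hpos k hk
        simp only [if_neg hk]
        omega
    rw [hcount] at key
    rw [hsum'] at key
    omega
  · intro p hp
    rw [Finset.Nat.mem_antidiagonalTuple] at hp
    simp only [Finset.mem_filter, Finset.mem_finsuppAntidiag]
    refine ⟨⟨?_, Finset.subset_univ _⟩, ?_⟩
    · have key : (∑ k : Fin (m' + 1), (if k.val = m' then p k else p k + 1)) =
          (∑ k : Fin (m' + 1), p k) + ∑ k : Fin (m' + 1), (if k.val = m' then 0 else 1) := by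
        rw [← Finset.sum_add_distrib]
        refine Finset.sum_congr rfl fun k _ => ?_
        by_cases hk : k.val = m' <;> simp [hk]
      have : ∀ k ∈ (Finset.univ : Finset (Fin (m' + 1))),
          (Finsupp.equivFunOnFinite.symm
            (fun k => if k.val = m' then p k else p k + 1)) k
            = (if k.val = m' then p k else p k + 1) := fun k _ => rfl
      rw [Finset.sum_congr rfl this, key, hcount, hp]
      omega
    · intro i hi
      simp only [Finsupp.coe_equivFunOnFinite_symm, if_neg hi]
      omega
  · intro l hl
    simp only [Finset.mem_filter] at hl
    ext k
    simp only [Finsupp.coe_equivFunOnFinite_symm]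
    by_cases hk : k.val = m'
    · simp [hk]
    · have := hl.2 k hk
      simp only [if_neg hk]
      omega
  · intro p hp
    funext k
    simp only [Finsupp.coe_equivFunOnFinite_symm]
    by_cases hk : k.val = m' <;> simp [hk]
  · intro l hl
    simp only [Finset.mem_filter, Finset.mem_finsuppAntidiag] at hl
    rw [Nat.cast_prod, ← Finset.prod_inv_distrib]
    refine Finset.prod_congr rfl fun k _ => ?_
    by_cases hk : k.val = m'
    · simp only [hf, if_pos hk, coeff_E]
    · have hne := hl.2 k hk
      have hlk : l k - 1 + 1 = l k := by omega
      simp only [hf, if_neg hk, coeff_u, if_neg hne, hlk]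

end CHaux
end

noncomputable section
namespace CHaux
open PowerSeries Finset

def LL (N : ℕ) : PowerSeries ℚ :=
  ∑ m ∈ Finset.Icc 1 N, (((-1 : ℚ)) ^ (m - 1) / m) • (u ^ m)

def GG (N : ℕ) : PowerSeries ℚ :=
  ∑ m ∈ Finset.Icc 1 N, (((-1 : ℚ)) ^ (m - 1) / m) • (u ^ (m - 1) * E)

lemma derivative_u_pow (m : ℕ) (hm : 1 ≤ m) :
    d⁄dX ℚ (u ^ m) = (m : ℚ) • (u ^ (m - 1) * E) := by
  rw [Derivation.leibniz_pow]
  have hu : d⁄dX ℚ u = E := by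
    show d⁄dX ℚ (E - 1) = E
    rw [map_sub, derivative_E, Derivation.map_one_eq_zero, sub_zero]
  rw [hu, smul_eq_mul]
  exact (Nat.cast_smul_eq_nsmul ℚ m _).symm

lemma derivative_LL (N : ℕ) (hN : 1 ≤ N) :
    d⁄dX ℚ (LL N) = 1 + ((-1 : ℚ)) ^ (N - 1) • (u ^ N) := by
  induction N with
  | zero => omega
  | succ N ih =>
    rcases Nat.eq_or_lt_of_le hN with h1 | h1
    · rw [LL, ← h1]
      rw [Finset.Icc_self, Finset.sum_singleton, Derivation.map_smul,
        derivative_u_pow 1 le_rfl]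
      norm_num
    · have hN' : 1 ≤ N := by omega
      rw [LL, Finset.sum_Icc_succ_top (by omega : 1 ≤ N + 1), map_add, ← LL, ih hN',
        Derivation.map_smul, derivative_u_pow (N + 1) (by omega)]
      have hc : (((-1 : ℚ)) ^ (N + 1 - 1) / ((N + 1 : ℕ) : ℚ)) • (((N + 1 : ℕ) : ℚ) •
          (u ^ (N + 1 - 1) * E)) = ((-1 : ℚ)) ^ N • (u ^ N * E) := by
        rw [smul_smul]
        have hNN : N + 1 - 1 = N := by omega
        rw [hNN]
        congr 1
        have h0 : ((N + 1 : ℕ) : ℚ) ≠ 0 := by positivity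
        field_simp
      rw [hc]
      have hE : u ^ N * E = u ^ N + u ^ (N + 1) := by
        have h3 : E = 1 + u := by ring
        rw [h3]
        ring
      rw [hE, smul_add]
      have hsign : ((-1 : ℚ)) ^ (N - 1) • (u ^ N : PowerSeries ℚ) +
          ((-1 : ℚ)) ^ N • (u ^ N) = 0 := by
        rw [← add_smul]
        have : ((-1 : ℚ)) ^ (N - 1) + (-1 : ℚ) ^ N = 0 := by
          have h2 : N - 1 + 1 = N := by omega
          calc ((-1 : ℚ)) ^ (N - 1) + (-1 : ℚ) ^ N
              = ((-1 : ℚ)) ^ (N - 1) + (-1 : ℚ) ^ (N - 1 + 1) := by rw [h2]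
            _ = 0 := by rw [pow_succ]; ring
        rw [this, zero_smul]
      have hNN : N + 1 - 1 = N := by omega
      rw [hNN]
      calc 1 + ((-1 : ℚ)) ^ (N - 1) • u ^ N +
            (((-1 : ℚ)) ^ N • u ^ N + ((-1 : ℚ)) ^ N • u ^ (N + 1))
          = 1 + ((((-1 : ℚ)) ^ (N - 1) • u ^ N + ((-1 : ℚ)) ^ N • u ^ N) +
            ((-1 : ℚ)) ^ N • u ^ (N + 1)) := by abel
        _ = 1 + (0 + ((-1 : ℚ)) ^ N • u ^ (N + 1)) := by rw [hsign]
        _ = 1 + ((-1 : ℚ)) ^ N • u ^ (N + 1) := by rw [zero_add]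

end CHaux
end

noncomputable section
namespace CHaux
open PowerSeries Finset

lemma coeff_LL (N j : ℕ) (h : j ≤ N) :
    coeff j (LL N) = coeff j (X : PowerSeries ℚ) := by
  cases j with
  | zero =>
    rw [LL, map_sum]
    rw [Finset.sum_eq_zero]
    · simp
    intro m hm
    rw [Finset.mem_Icc] at hm
    rw [map_smul, smul_eq_mul]
    have : coeff 0 (u ^ m) = 0 := by
      have := coeff_u_pow_mul m 0 (by omega) 1
      rwa [mul_one] at this
    rw [this, mul_zero]
  | succ j' =>
    have hN : 1 ≤ N := by omega
    have hd := derivative_LL N hN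
    have h1 : coeff j' (d⁄dX ℚ (LL N)) = coeff (j' + 1) (LL N) * (j' + 1) :=
      PowerSeries.coeff_derivative _ _
    have h2 : coeff j' (1 + ((-1 : ℚ)) ^ (N - 1) • (u ^ N)) =
        if j' = 0 then 1 else 0 := by
      rw [map_add, map_smul, PowerSeries.coeff_one]
      have : coeff j' (u ^ N) = 0 := by
        have := coeff_u_pow_mul N j' (by omega) 1
        rwa [mul_one] at this
      rw [this, smul_zero, add_zero]
    rw [hd, h2] at h1
    have hnz : ((j' : ℚ) + 1) ≠ 0 := by positivity
    rw [PowerSeries.coeff_X]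
    rcases Nat.eq_zero_or_pos j' with rfl | hj'
    · simp only [if_pos rfl] at h1 ⊢
      rw [show ((0 : ℕ) : ℚ) + 1 = 1 by norm_num, mul_one] at h1
      exact h1.symm
    · rw [if_neg (by omega)] at h1
      rw [if_neg (by omega)]
      exact (mul_eq_zero.mp h1.symm).resolve_right hnz

lemma coeff_GG (N i : ℕ) (h : i + 1 ≤ N) : coeff i (GG N) = aCH i := by
  rw [GG, map_sum]
  rw [← Finset.sum_subset (Finset.Icc_subset_Icc_right (by omega : i + 1 ≤ N))]
  · cases i with
    | zero =>
      rw [Finset.Icc_self, Finset.sum_singleton, map_smul, smul_eq_mul]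
      have h0 : coeff 0 (u ^ (1 - 1) * E) = 1 := by
        norm_num
      rw [h0]
      norm_num [aCH]
    | succ k =>
      rw [aCH]
      refine Finset.sum_congr rfl fun m hm => ?_
      rw [Finset.mem_Icc] at hm
      rw [map_smul, smul_eq_mul]
      congr 1
      have hm1 : m - 1 ≤ k + 1 := by omega
      have := coeff_u_pow_mul_E (m - 1) (k + 1) hm1
      rw [this]
      have e1 : m - 1 + 1 = m := by omega
      have e2 : k + 1 - (m - 1) = k + 2 - m := by omega
      rw [e1, e2]
  · intro m hm1 hm2
    rw [Finset.mem_Icc] at hm1 hm2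
    rw [map_smul, smul_eq_mul]
    have : coeff i (u ^ (m - 1) * E) = 0 :=
      coeff_u_pow_mul (m - 1) i (by omega) E
    rw [this, mul_zero]

lemma GG_mul : ∀ N : ℕ, GG N * (E - 1) = LL N * E := by
  intro N
  rw [GG, LL, Finset.sum_mul, Finset.sum_mul]
  refine Finset.sum_congr rfl fun m hm => ?_
  rw [Finset.mem_Icc] at hm
  rw [smul_mul_assoc, smul_mul_assoc]
  congr 1
  have e1 : m - 1 + 1 = m := by omega
  calc u ^ (m - 1) * E * (E - 1) = u ^ (m - 1) * u * E := by ring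
    _ = u ^ m * E := by rw [← pow_succ, e1]

theorem key_mul : PowerSeries.mk aCH * (E - 1) = X * E := by
  ext n
  rw [PowerSeries.coeff_mul, PowerSeries.coeff_mul]
  have step1 : ∀ p ∈ Finset.HasAntidiagonal.antidiagonal n,
      coeff p.1 (PowerSeries.mk aCH) * coeff p.2 (E - 1) =
      coeff p.1 (GG (n + 1)) * coeff p.2 (E - 1) := by
    intro p hp
    rw [Finset.HasAntidiagonal.mem_antidiagonal] at hp
    rw [PowerSeries.coeff_mk, coeff_GG (n + 1) p.1 (by omega)]
  rw [Finset.sum_congr rfl step1, ← PowerSeries.coeff_mul, GG_mul,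
    PowerSeries.coeff_mul]
  refine Finset.sum_congr rfl fun p hp => ?_
  rw [Finset.HasAntidiagonal.mem_antidiagonal] at hp
  rw [coeff_LL (n + 1) p.1 (by omega)]

end CHaux
end

noncomputable section
namespace CHaux
open PowerSeries

theorem part2 : PowerSeries.mk aCH *
    (1 - PowerSeries.rescale (-1) (PowerSeries.exp ℚ)) = PowerSeries.X := by
  have h1 : E * PowerSeries.rescale (-1) E = 1 := PowerSeries.exp_mul_exp_neg_eq_one
  have h2 : (E - 1) * PowerSeries.rescale (-1) E = 1 - PowerSeries.rescale (-1) E := by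
    rw [sub_mul, h1, one_mul]
  calc PowerSeries.mk aCH * (1 - PowerSeries.rescale (-1) E)
      = PowerSeries.mk aCH * ((E - 1) * PowerSeries.rescale (-1) E) := by rw [h2]
    _ = (PowerSeries.mk aCH * (E - 1)) * PowerSeries.rescale (-1) E := by ring
    _ = X * E * PowerSeries.rescale (-1) E := by rw [key_mul]
    _ = X * (E * PowerSeries.rescale (-1) E) := by ring
    _ = X := by rw [h1, mul_one]

theorem part1 : PowerSeries.mk aCH =
    (PowerSeries.mk fun i => ((-1 : ℚ)) ^ i / ((i + 1).factorial : ℚ))⁻¹ := by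
  set θ := PowerSeries.mk fun i => ((-1 : ℚ)) ^ i / ((i + 1).factorial : ℚ) with hθ
  have hc : PowerSeries.constantCoeff θ ≠ 0 := by
    rw [hθ, ← PowerSeries.coeff_zero_eq_constantCoeff, PowerSeries.coeff_mk]
    norm_num
  rw [PowerSeries.eq_inv_iff_mul_eq_one hc]
  have hXθ : (X : PowerSeries ℚ) * θ = 1 - PowerSeries.rescale (-1) E := by
    ext n
    cases n with
    | zero =>
      rw [PowerSeries.coeff_zero_eq_constantCoeff, map_mul, PowerSeries.constantCoeff_X,
        zero_mul, map_sub, map_one, ← PowerSeries.coeff_zero_eq_constantCoeff,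
        PowerSeries.coeff_rescale, PowerSeries.coeff_exp]
      norm_num
    | succ n =>
      rw [PowerSeries.coeff_succ_X_mul, PowerSeries.coeff_mk, map_sub,
        PowerSeries.coeff_one, PowerSeries.coeff_rescale, PowerSeries.coeff_exp]
      rw [if_neg (Nat.succ_ne_zero n)]
      have hid : (algebraMap ℚ ℚ) (1 / ((n + 1).factorial : ℚ)) =
          1 / ((n + 1).factorial : ℚ) := by
        simp
      rw [hid, pow_succ]
      ring
  have hX : (X : PowerSeries ℚ) * (PowerSeries.mk aCH * θ) = X * 1 := by
    rw [mul_one]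
    calc (X : PowerSeries ℚ) * (PowerSeries.mk aCH * θ)
        = PowerSeries.mk aCH * (X * θ) := by ring
      _ = PowerSeries.mk aCH * (1 - PowerSeries.rescale (-1) E) := by rw [hXθ]
      _ = X := part2
  exact mul_left_cancel₀ PowerSeries.X_ne_zero hX

end CHaux
end

noncomputable section
namespace CHB
open Real Filter

lemma analyticAt_deriv {f : ℝ → ℝ} {x : ℝ} (h : AnalyticAt ℝ f x) :
    AnalyticAt ℝ (deriv f) x :=
  (AnalyticOnNhd.deriv (s := {y | AnalyticAt ℝ f y}) (fun _ hy => hy)) x h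

lemma my_iteratedDeriv_add {x : ℝ} : ∀ (n : ℕ) (f g : ℝ → ℝ),
    AnalyticAt ℝ f x → AnalyticAt ℝ g x →
    iteratedDeriv n (fun y => f y + g y) x = iteratedDeriv n f x + iteratedDeriv n g x := by
  intro n
  induction n with
  | zero => intro f g _ _; simp
  | succ n ih =>
    intro f g hf hg
    have hev : deriv (fun y => f y + g y) =ᶠ[nhds x] fun y => deriv f y + deriv g y := by
      filter_upwards [hf.eventually_analyticAt, hg.eventually_analyticAt] with y hfy hgy
      exact deriv_add hfy.differentiableAt hgy.differentiableAt
    rw [iteratedDeriv_succ', iteratedDeriv_succ', iteratedDeriv_succ',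
      hev.iteratedDeriv_eq n]
    exact ih _ _ (analyticAt_deriv hf) (analyticAt_deriv hg)

lemma my_leibniz {x : ℝ} : ∀ (n : ℕ) (f g : ℝ → ℝ),
    AnalyticAt ℝ f x → AnalyticAt ℝ g x →
    iteratedDeriv n (fun y => f y * g y) x =
      ∑ k ∈ Finset.range (n + 1),
        (n.choose k : ℝ) * iteratedDeriv k f x * iteratedDeriv (n - k) g x := by
  intro n
  induction n with
  | zero => intro f g _ _; simp
  | succ n ih =>
    intro f g hf hg
    have hev : deriv (fun y => f y * g y) =ᶠ[nhds x]
        fun y => deriv f y * g y + f y * deriv g y := by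
      filter_upwards [hf.eventually_analyticAt, hg.eventually_analyticAt] with y hfy hgy
      exact deriv_mul hfy.differentiableAt hgy.differentiableAt
    rw [iteratedDeriv_succ', hev.iteratedDeriv_eq n,
      my_iteratedDeriv_add n (fun y => deriv f y * g y) (fun y => f y * deriv g y) ((analyticAt_deriv hf).mul hg) (hf.mul (analyticAt_deriv hg)),
      ih _ _ (analyticAt_deriv hf) hg, ih _ _ hf (analyticAt_deriv hg)]
    have e1 : ∀ k ∈ Finset.range (n + 1),
        (n.choose k : ℝ) * iteratedDeriv k (deriv f) x * iteratedDeriv (n - k) g x =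
        (n.choose k : ℝ) * iteratedDeriv (k + 1) f x * iteratedDeriv (n + 1 - (k + 1)) g x := by
      intro k hk
      rw [← iteratedDeriv_succ', Nat.succ_sub_succ]
    have e2 : ∀ k ∈ Finset.range (n + 1),
        (n.choose k : ℝ) * iteratedDeriv k f x * iteratedDeriv (n - k) (deriv g) x =
        (n.choose k : ℝ) * iteratedDeriv k f x * iteratedDeriv (n + 1 - k) g x := by
      intro k hk
      rw [Finset.mem_range] at hk
      have hnk : n - k + 1 = n + 1 - k := by omega
      rw [← iteratedDeriv_succ', hnk]
    rw [Finset.sum_congr rfl e1, Finset.sum_congr rfl e2]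
    -- RHS manipulation
    have hR : ∑ k ∈ Finset.range (n + 2),
        ((n + 1).choose k : ℝ) * iteratedDeriv k f x * iteratedDeriv (n + 1 - k) g x =
        (∑ k ∈ Finset.range (n + 1),
          (n.choose k : ℝ) * iteratedDeriv (k + 1) f x * iteratedDeriv (n + 1 - (k + 1)) g x) +
        ((∑ k ∈ Finset.range (n + 1),
          (n.choose (k + 1) : ℝ) * iteratedDeriv (k + 1) f x *
            iteratedDeriv (n + 1 - (k + 1)) g x) +
          ((n + 1).choose 0 : ℝ) * iteratedDeriv 0 f x * iteratedDeriv (n + 1 - 0) g x) := by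
      have hsplit : ∀ k ∈ Finset.range (n + 1),
          ((n + 1).choose (k + 1) : ℝ) * iteratedDeriv (k + 1) f x *
            iteratedDeriv (n + 1 - (k + 1)) g x =
          (n.choose k : ℝ) * iteratedDeriv (k + 1) f x * iteratedDeriv (n + 1 - (k + 1)) g x +
          (n.choose (k + 1) : ℝ) * iteratedDeriv (k + 1) f x *
            iteratedDeriv (n + 1 - (k + 1)) g x := by
        intro k _
        rw [Nat.choose_succ_succ]
        push_cast
        ring
      rw [Finset.sum_range_succ'
        (fun k => ((n + 1).choose k : ℝ) * iteratedDeriv k f x * iteratedDeriv (n + 1 - k) g x)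
        (n + 1), Finset.sum_congr rfl hsplit, Finset.sum_add_distrib, add_assoc]
    have hS2 : (∑ k ∈ Finset.range (n + 1),
          (n.choose (k + 1) : ℝ) * iteratedDeriv (k + 1) f x *
            iteratedDeriv (n + 1 - (k + 1)) g x) +
          ((n + 1).choose 0 : ℝ) * iteratedDeriv 0 f x * iteratedDeriv (n + 1 - 0) g x =
        ∑ k ∈ Finset.range (n + 1),
          (n.choose k : ℝ) * iteratedDeriv k f x * iteratedDeriv (n + 1 - k) g x := by
      have h0 : ((n + 1).choose 0 : ℝ) * iteratedDeriv 0 f x * iteratedDeriv (n + 1 - 0) g x =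
          (n.choose 0 : ℝ) * iteratedDeriv 0 f x * iteratedDeriv (n + 1 - 0) g x := by
        norm_num
      rw [h0, ← Finset.sum_range_succ'
        (fun k => (n.choose k : ℝ) * iteratedDeriv k f x * iteratedDeriv (n + 1 - k) g x) (n + 1),
        Finset.sum_range_succ]
      rw [Nat.choose_succ_self]
      norm_num
    rw [hR, hS2]

end CHB
end

noncomputable section
namespace CHB
open Real Filter

def uf : ℝ → ℝ := fun x => 1 - Real.exp (-x)

lemma uf_analytic (x : ℝ) : AnalyticAt ℝ uf x := by
  have h1 : AnalyticAt ℝ (fun y : ℝ => Real.exp (-y)) x :=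
    analyticAt_rexp.comp (analyticAt_id.neg)
  exact analyticAt_const.sub h1

lemma uf_zero : uf 0 = 0 := by simp [uf]

lemma hasDerivAt_uf (x : ℝ) : HasDerivAt uf (Real.exp (-x)) x := by
  have h1 : HasDerivAt (fun y : ℝ => -y) (-1) x := (hasDerivAt_id x).neg
  have h2 : HasDerivAt (fun y : ℝ => Real.exp (-y)) (Real.exp (-x) * -1) x :=
    (Real.hasDerivAt_exp (-x)).comp x h1
  have h3 := h2.const_sub 1
  exact h3.congr_deriv (by ring)

lemma deriv_uf : deriv uf = fun x => Real.exp (-x) :=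
  funext fun x => (hasDerivAt_uf x).deriv

lemma iteratedDeriv_uf_succ : ∀ j : ℕ,
    iteratedDeriv (j + 1) uf = fun x => (-1 : ℝ) ^ j * Real.exp (-x) := by
  intro j
  induction j with
  | zero =>
    rw [iteratedDeriv_one, deriv_uf]
    funext x
    norm_num
  | succ j ih =>
    rw [iteratedDeriv_succ, ih]
    funext x
    have h1 : HasDerivAt (fun y : ℝ => -y) (-1) x := (hasDerivAt_id x).neg
    have h2 : HasDerivAt (fun y : ℝ => Real.exp (-y)) (Real.exp (-x) * -1) x :=
      (Real.hasDerivAt_exp (-x)).comp x h1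
    have h3 := h2.const_mul ((-1 : ℝ) ^ j)
    rw [h3.deriv]
    rw [pow_succ]
    ring

lemma iteratedDeriv_uf_at0 (j : ℕ) :
    iteratedDeriv j uf 0 = if j = 0 then 0 else (-1 : ℝ) ^ (j - 1) := by
  cases j with
  | zero => simpa using uf_zero
  | succ j =>
    rw [iteratedDeriv_uf_succ j]
    simp

def ψf : ℝ → ℝ := dslope uf 0

lemma ψf_zero : ψf 0 = 1 := by
  rw [ψf, dslope_same, (hasDerivAt_uf 0).deriv]
  simp

lemma ψf_analytic : AnalyticAt ℝ ψf 0 := by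
  obtain ⟨p, hp⟩ := uf_analytic 0
  exact ⟨p.fslope, hp.has_fpower_series_dslope_fslope⟩

def Hf : ℝ → ℝ := fun x => (ψf x)⁻¹

lemma Hf_zero : Hf 0 = 1 := by rw [Hf, ψf_zero]; norm_num

lemma Hf_analytic : AnalyticAt ℝ Hf 0 :=
  ψf_analytic.inv (by rw [ψf_zero]; exact one_ne_zero)

lemma ψf_ne_eventually : ∀ᶠ x in nhds (0 : ℝ), ψf x ≠ 0 :=
  ψf_analytic.continuousAt.eventually_ne (by rw [ψf_zero]; exact one_ne_zero)

lemma Hu_eq : (fun x => Hf x * uf x) =ᶠ[nhds (0 : ℝ)] fun x => x := by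
  filter_upwards [ψf_ne_eventually] with x hx
  by_cases hx0 : x = 0
  · subst hx0
    rw [uf_zero, mul_zero]
  · have hψ : ψf x = uf x / x := by
      rw [ψf, dslope_of_ne _ hx0, slope_def_field, uf_zero, sub_zero, sub_zero]
    have hufx : uf x ≠ 0 := by
      intro h0
      rw [hψ, h0, zero_div] at hx
      exact hx rfl
    rw [Hf, hψ]
    field_simp

def iterOp : (ℝ → ℝ) → (ℝ → ℝ) := fun g => fun y => y * deriv g y

def ff : ℝ → ℝ := fun y => if y = 1 then 1 else y * Real.log y / (y - 1)

lemma Hk_eventually : ∀ k : ℕ, ∀ᶠ x in nhds (0 : ℝ), AnalyticAt ℝ (iteratedDeriv k Hf) x := by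
  intro k
  induction k with
  | zero => exact Hf_analytic.eventually_analyticAt
  | succ k ih =>
    filter_upwards [ih] with x hx
    rw [iteratedDeriv_succ]
    exact analyticAt_deriv hx

lemma Hk_log_eventually (k : ℕ) :
    ∀ᶠ y in nhds (1 : ℝ), AnalyticAt ℝ (iteratedDeriv k Hf) (Real.log y) := by
  have hcont : ContinuousAt Real.log 1 := Real.continuousAt_log one_ne_zero
  have h0 : Real.log 1 = 0 := Real.log_one
  have h1 : ∀ᶠ x in nhds (Real.log 1), AnalyticAt ℝ (iteratedDeriv k Hf) x := by
    rw [h0]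
    exact Hk_eventually k
  exact hcont.eventually h1

end CHB
end

noncomputable section
namespace CHB
open Real Filter

lemma germ : ∀ k : ℕ, iterOp^[k] ff =ᶠ[nhds (1 : ℝ)]
    fun y => iteratedDeriv k Hf (Real.log y) := by
  intro k
  induction k with
  | zero =>
    have hψlog : ∀ᶠ y in nhds (1 : ℝ), ψf (Real.log y) ≠ 0 := by
      have hcont : ContinuousAt Real.log 1 := Real.continuousAt_log one_ne_zero
      have h1 : ∀ᶠ x in nhds (Real.log 1), ψf x ≠ 0 := by
        rw [Real.log_one]
        exact ψf_ne_eventually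
      exact hcont.eventually h1
    filter_upwards [hψlog, eventually_gt_nhds zero_lt_one] with y hψy hy0
    simp only [Function.iterate_zero, id_eq, iteratedDeriv_zero]
    by_cases hy1 : y = 1
    · subst hy1
      rw [ff, if_pos rfl, Real.log_one, Hf_zero]
    · have hlog : Real.log y ≠ 0 := Real.log_ne_zero_of_pos_of_ne_one hy0 hy1
      have hufl : uf (Real.log y) = (y - 1) / y := by
        rw [uf, Real.exp_neg, Real.exp_log hy0]
        field_simp
      have hψl : ψf (Real.log y) = (y - 1) / y / Real.log y := by
        rw [ψf, dslope_of_ne _ hlog, slope_def_field, uf_zero, sub_zero, sub_zero, hufl]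
      rw [ff, if_neg hy1, Hf, hψl]
      have hy1' : y - 1 ≠ 0 := sub_ne_zero.mpr hy1
      field_simp
  | succ k ih =>
    have hev : ∀ᶠ y in nhds (1 : ℝ),
        iterOp^[k] ff =ᶠ[nhds y] fun z => iteratedDeriv k Hf (Real.log z) :=
      ih.eventually_nhds
    filter_upwards [hev, Hk_log_eventually k, eventually_gt_nhds zero_lt_one] with y hEy hAy hy0
    rw [Function.iterate_succ_apply']
    show y * deriv (iterOp^[k] ff) y = iteratedDeriv (k + 1) Hf (Real.log y)
    rw [hEy.deriv_eq]
    have hder : HasDerivAt (fun z => iteratedDeriv k Hf (Real.log z))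
        (deriv (iteratedDeriv k Hf) (Real.log y) * y⁻¹) y := by
      have h1 : HasDerivAt Real.log y⁻¹ y := Real.hasDerivAt_log hy0.ne'
      exact (hAy.differentiableAt.hasDerivAt).comp y h1
    rw [hder.deriv]
    rw [iteratedDeriv_succ]
    field_simp

lemma iter_at_one (k : ℕ) : iterOp^[k] ff 1 = iteratedDeriv k Hf 0 := by
  have := (germ k).eq_of_nhds
  rwa [Real.log_one] at this

lemma iteratedDeriv_id_at (n : ℕ) :
    iteratedDeriv n (fun y : ℝ => y) 0 = if n = 1 then 1 else 0 := by
  have hconst : ∀ (m : ℕ) (c : ℝ), iteratedDeriv (m + 1) (fun _ : ℝ => c) = fun _ => 0 := by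
    intro m
    induction m with
    | zero => intro c; rw [iteratedDeriv_one]; exact deriv_const' c
    | succ m ih =>
      intro c
      rw [iteratedDeriv_succ', deriv_const' c, ih 0]
  match n with
  | 0 => simp
  | 1 => rw [iteratedDeriv_one]; simp
  | (m + 2) =>
    rw [iteratedDeriv_succ', deriv_id'', hconst m 1]
    simp

end CHB
end

noncomputable section
namespace CHB
open Real Filter

def cU : ℕ → ℝ := fun j => if j = 0 then 0 else (-1 : ℝ) ^ (j - 1)
def cQR : ℕ → ℝ := fun j => if j = 0 then 0 else (-1 : ℝ) ^ (j - 1) / (j.factorial : ℝ)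

lemma cU_eq (j : ℕ) : cU j = (j.factorial : ℝ) * cQR j := by
  rw [cU, cQR]
  split_ifs with h
  · rw [mul_zero]
  · field_simp

lemma hrecR (n : ℕ) :
    ∑ k ∈ Finset.range (n + 1), (n.choose k : ℝ) * iteratedDeriv k Hf 0 * cU (n - k) =
      if n = 1 then 1 else 0 := by
  have h1 := my_leibniz n Hf uf Hf_analytic (uf_analytic 0)
  have h2 : iteratedDeriv n (fun y => Hf y * uf y) 0 = iteratedDeriv n (fun y : ℝ => y) 0 :=
    Hu_eq.iteratedDeriv_eq n
  rw [iteratedDeriv_id_at] at h2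
  rw [h1] at h2
  rw [← h2]
  refine Finset.sum_congr rfl fun k _ => ?_
  rw [iteratedDeriv_uf_at0, cU]

end CHB
end

noncomputable section
namespace CHB
open Real Filter

lemma coeff_w (j : ℕ) : (PowerSeries.coeff j)
    (1 - PowerSeries.rescale (-1) (PowerSeries.exp ℚ)) =
    if j = 0 then 0 else (-1 : ℚ) ^ (j - 1) / (j.factorial : ℚ) := by
  rw [map_sub, PowerSeries.coeff_one, PowerSeries.coeff_rescale, PowerSeries.coeff_exp]
  have hid : ∀ q : ℚ, (algebraMap ℚ ℚ) q = q := fun q => by simp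
  rw [hid]
  cases j with
  | zero => norm_num
  | succ j =>
    rw [if_neg (Nat.succ_ne_zero j), if_neg (Nat.succ_ne_zero j)]
    rw [pow_succ, Nat.succ_sub_one]
    field_simp
    ring

lemma coeff_identity (n : ℕ) :
    ∑ k ∈ Finset.range (n + 1), aCH k *
      (if n - k = 0 then 0 else (-1 : ℚ) ^ (n - k - 1) / ((n - k).factorial : ℚ)) =
      if n = 1 then 1 else 0 := by
  have h := congrArg (PowerSeries.coeff n) CHaux.part2
  rw [PowerSeries.coeff_mul, Finset.Nat.sum_antidiagonal_eq_sum_range_succ_mk,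
    PowerSeries.coeff_X] at h
  rw [← h]
  refine Finset.sum_congr rfl fun k _ => ?_
  rw [PowerSeries.coeff_mk, coeff_w]

lemma dk_eq : ∀ n : ℕ, iteratedDeriv n Hf 0 = (n.factorial : ℝ) * ((aCH n : ℚ) : ℝ) := by
  intro n
  induction n using Nat.strong_induction_on with
  | _ n IH =>
  have hR := hrecR (n + 1)
  have hQ : ∑ k ∈ Finset.range (n + 2), ((aCH k : ℚ) : ℝ) * cQR (n + 1 - k) =
      if n + 1 = 1 then 1 else 0 := by
    have h := coeff_identity (n + 1)
    have h2 := congrArg (fun q : ℚ => (q : ℝ)) h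
    push_cast at h2
    have hgoal : (if n + 1 = 1 then (1 : ℝ) else 0) = (((if n = 0 then 1 else 0 : ℚ)) : ℝ) := by
      by_cases hn : n = 0 <;> simp [hn]
    rw [hgoal, ← h2]
    refine Finset.sum_congr rfl fun k _ => ?_
    rw [cQR]
    split_ifs with hk <;> push_cast <;> ring
  set T : ℕ → ℝ := fun k => ((n + 1).choose k : ℝ) * iteratedDeriv k Hf 0 * cU (n + 1 - k) -
    ((n + 1).factorial : ℝ) * ((aCH k : ℚ) : ℝ) * cQR (n + 1 - k) with hT
  have hsum : ∑ k ∈ Finset.range (n + 2), T k = 0 := by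
    rw [Finset.sum_sub_distrib, hR]
    have : ∑ k ∈ Finset.range (n + 2),
        ((n + 1).factorial : ℝ) * ((aCH k : ℚ) : ℝ) * cQR (n + 1 - k) =
        ((n + 1).factorial : ℝ) * ∑ k ∈ Finset.range (n + 2),
          ((aCH k : ℚ) : ℝ) * cQR (n + 1 - k) := by
      rw [Finset.mul_sum]
      refine Finset.sum_congr rfl fun k _ => ?_
      ring
    rw [this, hQ]
    by_cases hn : n = 0
    · subst hn
      norm_num
    · rw [if_neg (by omega)]
      norm_num
  have hother : ∀ k ∈ Finset.range (n + 2), k ≠ n → T k = 0 := by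
    intro k hk hkn
    rw [Finset.mem_range] at hk
    rcases Nat.lt_or_ge k n with hlt | hge
    · have hIH := IH k hlt
      rw [hT]
      simp only
      rw [hIH, cU_eq]
      have hfac : ((n + 1).choose k : ℝ) * (k.factorial : ℝ) * ((n + 1 - k).factorial : ℝ) =
          ((n + 1).factorial : ℝ) := by
        rw [← Nat.cast_mul, ← Nat.cast_mul,
          Nat.choose_mul_factorial_mul_factorial (by omega : k ≤ n + 1)]
      calc ((n + 1).choose k : ℝ) * ((k.factorial : ℝ) * ((aCH k : ℚ) : ℝ)) *
            (((n + 1 - k).factorial : ℝ) * cQR (n + 1 - k)) -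
          ((n + 1).factorial : ℝ) * ((aCH k : ℚ) : ℝ) * cQR (n + 1 - k)
          = (((n + 1).choose k : ℝ) * (k.factorial : ℝ) * ((n + 1 - k).factorial : ℝ) -
            ((n + 1).factorial : ℝ)) * (((aCH k : ℚ) : ℝ) * cQR (n + 1 - k)) := by ring
        _ = 0 := by rw [hfac]; ring
    · have hk1 : k = n + 1 := by omega
      subst hk1
      rw [hT]
      simp only
      rw [Nat.sub_self, cU, cQR, if_pos rfl, if_pos rfl]
      ring
  have h5 : ∑ k ∈ Finset.range (n + 2), T k = T n :=
    Finset.sum_eq_single_of_mem n (by rw [Finset.mem_range]; omega) hother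
  have hTn : T n = 0 := by rw [← h5, hsum]
  rw [hT] at hTn
  simp only at hTn
  have h1 : n + 1 - n = 1 := by omega
  rw [h1, cU, cQR] at hTn
  rw [if_neg one_ne_zero, if_neg one_ne_zero] at hTn
  have hch : ((n + 1).choose n : ℝ) = (n : ℝ) + 1 := by
    rw [Nat.choose_succ_self_right]
    push_cast
    ring
  have hfac : ((n + 1).factorial : ℝ) = ((n : ℝ) + 1) * (n.factorial : ℝ) := by
    rw [Nat.factorial_succ]
    push_cast
    ring
  rw [hch, hfac] at hTn
  norm_num [Nat.factorial_one] at hTn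
  have hne : ((n : ℝ) + 1) ≠ 0 := by positivity
  have h7 : ((n : ℝ) + 1) * (iteratedDeriv n Hf 0) =
      ((n : ℝ) + 1) * ((n.factorial : ℝ) * ((aCH n : ℚ) : ℝ)) := by
    linear_combination hTn
  exact mul_left_cancel₀ hne h7

theorem part3 : ∀ k : ℕ, ((aCH k : ℚ) : ℝ) = (iterOp^[k] ff 1) / (k.factorial : ℝ) := by
  intro k
  rw [iter_at_one, dk_eq]
  have hne : (k.factorial : ℝ) ≠ 0 := by positivity
  field_simp

end CHB
end


noncomputable section

/-- (4.12), (4.20), (4.21). -/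
theorem campbell_hausdorff_coefficients :
    (PowerSeries.mk aCH =
      (PowerSeries.mk fun i => ((-1 : ℚ)) ^ i / ((i + 1).factorial : ℚ))⁻¹) ∧
    (PowerSeries.mk aCH * (1 - PowerSeries.rescale (-1) (PowerSeries.exp ℚ)) =
      PowerSeries.X) ∧
    ∀ k : ℕ, (aCH k : ℝ) =
      (((fun g : ℝ → ℝ => fun y => y * deriv g y)^[k]
          (fun y : ℝ => if y = 1 then 1 else y * Real.log y / (y - 1))) 1) /
        (k.factorial : ℝ) := by
  exact ⟨CHaux.part1, CHaux.part2, fun k => CHB.part3 k⟩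

end
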